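/- arXiv:2001.05306 — 2 statements merged into one kernel-verified Lean document; each statement's English description precedes it below -/
import Mathlib

section
/- If λ is a maximal line of a GC_n set X, then every maximal line of X different from λ is a maximal line of X \ λ. -/
attribute [local instance] Classical.propDecidable

/-- Evaluate a bivariate polynomial at a point of the plane. -/
noncomputable def evalPt (p : MvPolynomial (Fin 2) ℝ) (A : ℝ × ℝ) : ℝ :=
  MvPolynomial.eval ![A.1, A.2] p

/-- A (polynomial defining a) line: a bivariate polynomial of total degree exactly 1. -/
def IsLinearPoly (l : MvPolynomial (Fin 2) ℝ) : Prop := l.totalDegree = 1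

/-- A point lies on the line defined by `l`. -/
def OnLine (l : MvPolynomial (Fin 2) ℝ) (A : ℝ × ℝ) : Prop := evalPt l A = 0

/-- Two degree-1 polynomials define the same line (same zero set). -/
def SameLine (l₁ l₂ : MvPolynomial (Fin 2) ℝ) : Prop := ∀ P, OnLine l₁ P ↔ OnLine l₂ P

/-- `X` is an `n`-correct set of nodes in the plane. -/
def NCorrect (n : ℕ) (X : Finset (ℝ × ℝ)) : Prop :=
  X.card = (n + 2) * (n + 1) / 2 ∧
  ∀ c : (ℝ × ℝ) → ℝ, ∃! p : MvPolynomial (Fin 2) ℝ,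
    p.totalDegree ≤ n ∧ ∀ A ∈ X, evalPt p A = c A

/-- `p` is the `n`-fundamental polynomial of node `A` in `X`. -/
def IsFundamental (n : ℕ) (X : Finset (ℝ × ℝ)) (A : ℝ × ℝ)
    (p : MvPolynomial (Fin 2) ℝ) : Prop :=
  p.totalDegree ≤ n ∧ evalPt p A = 1 ∧ ∀ B ∈ X, B ≠ A → evalPt p B = 0

/-- Node `A` of `X` uses line `l`. -/
def Uses (n : ℕ) (X : Finset (ℝ × ℝ)) (A : ℝ × ℝ) (l : MvPolynomial (Fin 2) ℝ) : Prop :=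
  ∃ p, IsFundamental n X A p ∧ l ∣ p

/-- The set of nodes of `X` using the line `l` (the set `Xˡ`). -/
noncomputable def UsedSet (n : ℕ) (X : Finset (ℝ × ℝ)) (l : MvPolynomial (Fin 2) ℝ) :
    Finset (ℝ × ℝ) := X.filter (fun A => Uses n X A l)

/-- `l` is a maximal line of `X`: a line passing through exactly `n+1` nodes. -/
def IsMaximalLine (n : ℕ) (X : Finset (ℝ × ℝ)) (l : MvPolynomial (Fin 2) ℝ) : Prop :=
  IsLinearPoly l ∧ (X.filter (fun A => OnLine l A)).card = n + 1

/-- `X` is a `GC_n` set. -/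
def GCSet (n : ℕ) (X : Finset (ℝ × ℝ)) : Prop :=
  NCorrect n X ∧
  ∀ A ∈ X, ∃ f : Fin n → MvPolynomial (Fin 2) ℝ,
    (∀ i, IsLinearPoly (f i)) ∧ IsFundamental n X A (∏ i, f i)

/-- `L` is a set of representatives (one per line) of all maximal lines of `X`. -/
def MaximalLinesRep (n : ℕ) (X : Finset (ℝ × ℝ))
    (L : Finset (MvPolynomial (Fin 2) ℝ)) : Prop :=
  (∀ l ∈ L, IsMaximalLine n X l) ∧
  (∀ l₁ ∈ L, ∀ l₂ ∈ L, SameLine l₁ l₂ → l₁ = l₂) ∧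
  (∀ l, IsMaximalLine n X l → ∃ l' ∈ L, SameLine l l')

/-- A maximal line `lam` is `l`-disjoint: it meets `l` at no node of `X`. -/
def IsDisjointMax (n : ℕ) (X : Finset (ℝ × ℝ)) (l lam : MvPolynomial (Fin 2) ℝ) : Prop :=
  IsMaximalLine n X lam ∧ ∀ A ∈ X, ¬(OnLine lam A ∧ OnLine l A)

/-- A maximal line `lam` is a member of a pair of `l`-adjoint maximal lines. -/
def IsAdjointMax (n : ℕ) (X : Finset (ℝ × ℝ)) (l lam : MvPolynomial (Fin 2) ℝ) : Prop :=
  IsMaximalLine n X lam ∧ ∃ lam', IsMaximalLine n X lam' ∧ ¬SameLine lam lam' ∧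
    ∃ A ∈ X, OnLine lam A ∧ OnLine lam' A ∧ OnLine l A

/-- The `l`-lowering `X̂(l)` of `X`. -/
noncomputable def Lowering (n : ℕ) (X : Finset (ℝ × ℝ)) (l : MvPolynomial (Fin 2) ℝ) :
    Finset (ℝ × ℝ) :=
  X.filter (fun A => ¬ ∃ lam, (IsDisjointMax n X l lam ∨ IsAdjointMax n X l lam) ∧ OnLine lam A)

/-- A node `A` is a `1_m`-node of `X` w.r.t. the maximal-line representatives `L`:
it lies on exactly one maximal line. -/
def Is1mNode (L : Finset (MvPolynomial (Fin 2) ℝ)) (A : ℝ × ℝ) : Prop :=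
  (L.filter (fun l => OnLine l A)).card = 1

/-- `k` lines in general position: no two parallel (any two meet in exactly one point),
no three concurrent. -/
def InGenPos (k : ℕ) (f : Fin k → MvPolynomial (Fin 2) ℝ) : Prop :=
  (∀ i, IsLinearPoly (f i)) ∧
  (∀ i j, i ≠ j → ∃! P : ℝ × ℝ, OnLine (f i) P ∧ OnLine (f j) P) ∧
  (∀ i j m, i ≠ j → j ≠ m → i ≠ m →
    ¬ ∃ P : ℝ × ℝ, OnLine (f i) P ∧ OnLine (f j) P ∧ OnLine (f m) P)

/-- `X` is a Chung-Yao lattice of degree `m`. -/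
def IsChungYao (m : ℕ) (X : Finset (ℝ × ℝ)) : Prop :=
  ∃ f : Fin (m + 2) → MvPolynomial (Fin 2) ℝ, InGenPos (m + 2) f ∧
    ∀ P : ℝ × ℝ, P ∈ X ↔ ∃ i j, i ≠ j ∧ OnLine (f i) P ∧ OnLine (f j) P
lemma deg_classify (d : Fin 2 →₀ ℕ) (h : d 0 + d 1 ≤ 1) :
    d = 0 ∨ d = Finsupp.single 0 1 ∨ d = Finsupp.single 1 1 := by
  rcases Nat.le_one_iff_eq_zero_or_eq_one.mp (le_trans (Nat.le_add_right _ _) h) with h0 | h0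
  · rcases Nat.le_one_iff_eq_zero_or_eq_one.mp (le_trans (Nat.le_add_left _ _) h) with h1 | h1
    · left; ext i; fin_cases i <;> simp [h0, h1]
    · right; right; ext i; fin_cases i <;> simp [h0, h1, Finsupp.single_apply]
  · right; left; ext i; fin_cases i <;>
      simp [h0, Finsupp.single_apply]
    omega

lemma lin_eval (p : MvPolynomial (Fin 2) ℝ) (hp : p.totalDegree ≤ 1) (A : ℝ × ℝ) :
    evalPt p A = p.coeff 0 + p.coeff (Finsupp.single 0 1) * A.1
      + p.coeff (Finsupp.single 1 1) * A.2 := by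
  have hsupp : p.support ⊆ ({0, Finsupp.single 0 1, Finsupp.single 1 1} :
      Finset (Fin 2 →₀ ℕ)) := by
    intro d hd
    have hdeg : d 0 + d 1 ≤ 1 := by
      have := MvPolynomial.le_totalDegree (p := p) hd
      have hsum : (d.sum fun _ e => e) = d 0 + d 1 := by
        rw [Finsupp.sum_fintype] <;> simp [Fin.sum_univ_two]
      omega
    rcases deg_classify d hdeg with h | h | h <;> simp [h]
  rw [evalPt, MvPolynomial.eval_eq]
  rw [Finset.sum_subset hsupp (by
    intro d _ hd
    simp [MvPolynomial.notMem_support_iff.mp hd])]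
  have h01 : (0 : Fin 2 →₀ ℕ) ≠ Finsupp.single 0 1 := by
    intro h; simpa using (Finsupp.ext_iff.mp h 0)
  have h02 : (0 : Fin 2 →₀ ℕ) ≠ Finsupp.single 1 1 := by
    intro h; simpa using (Finsupp.ext_iff.mp h 1)
  have h12 : (Finsupp.single 0 1 : Fin 2 →₀ ℕ) ≠ Finsupp.single 1 1 := by
    intro h; simpa using (Finsupp.ext_iff.mp h 0)
  rw [Finset.sum_insert (by simp [h01, h02]), Finset.sum_insert (by simp [h12]),
    Finset.sum_singleton]
  simp [Fin.prod_univ_two, Finsupp.single_apply]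
  ring

lemma lin_grad_ne (p : MvPolynomial (Fin 2) ℝ) (hp : IsLinearPoly p) :
    p.coeff (Finsupp.single 0 1) ≠ 0 ∨ p.coeff (Finsupp.single 1 1) ≠ 0 := by
  by_contra h
  push_neg at h
  obtain ⟨h1, h2⟩ := h
  -- some monomial of degree 1 is in the support
  rw [IsLinearPoly] at hp
  have hle : p.totalDegree ≤ 0 := by
    apply Finset.sup_le
    intro d hd
    have hdeg : d 0 + d 1 ≤ 1 := by
      have := MvPolynomial.le_totalDegree (p := p) hd
      have hsum : (d.sum fun _ e => e) = d 0 + d 1 := by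
        rw [Finsupp.sum_fintype] <;> simp [Fin.sum_univ_two]
      omega
    rcases deg_classify d hdeg with h | h | h
    · rw [h]; simp
    · rw [h] at hd; exact absurd h1 (MvPolynomial.mem_support_iff.mp hd)
    · rw [h] at hd; exact absurd h2 (MvPolynomial.mem_support_iff.mp hd)
  omega

/-- two distinct common zeros of two linear polys: zero sets coincide (one inclusion). -/
lemma two_points (f g : MvPolynomial (Fin 2) ℝ) (hf : IsLinearPoly f) (hg : IsLinearPoly g)
    (P Q : ℝ × ℝ) (hPQ : P ≠ Q)
    (hfP : OnLine f P) (hfQ : OnLine f Q) (hgP : OnLine g P) (hgQ : OnLine g Q)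
    (R : ℝ × ℝ) (hR : OnLine f R) : OnLine g R := by
  set a := f.coeff (Finsupp.single 0 1)
  set b := f.coeff (Finsupp.single 1 1)
  set c := f.coeff 0
  set a' := g.coeff (Finsupp.single 0 1)
  set b' := g.coeff (Finsupp.single 1 1)
  set c' := g.coeff 0
  rw [OnLine, lin_eval f hf.le] at hfP hfQ hR
  rw [OnLine, lin_eval g hg.le] at hgP hgQ ⊢
  have hd : (Q.1 - P.1, Q.2 - P.2) ≠ (0, 0) := by
    intro h
    apply hPQ
    have h1 := congrArg Prod.fst h
    have h2 := congrArg Prod.snd h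
    simp at h1 h2
    exact Prod.ext (by linarith) (by linarith)
  have e1 : a * (Q.1 - P.1) + b * (Q.2 - P.2) = 0 := by linear_combination hfQ - hfP
  have e2 : a' * (Q.1 - P.1) + b' * (Q.2 - P.2) = 0 := by linear_combination hgQ - hgP
  have det : a * b' - a' * b = 0 := by
    rcases eq_or_ne (Q.1 - P.1) 0 with h1 | h1
    · rcases eq_or_ne (Q.2 - P.2) 0 with h2 | h2
      · exact absurd (by simp [h1, h2, Prod.ext_iff] : (Q.1 - P.1, Q.2 - P.2) = (0,0)) hd
      · have hb : b = 0 := by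
          have := e1; rw [h1] at this; simp at this; rcases this with h|h; exact h; exact absurd h h2
        have hb' : b' = 0 := by
          have := e2; rw [h1] at this; simp at this; rcases this with h|h; exact h; exact absurd h h2
        simp [hb, hb']
    · have key : (a * b' - a' * b) * (Q.1 - P.1) = 0 := by
        have : b' * (a * (Q.1 - P.1) + b * (Q.2 - P.2)) - b * (a' * (Q.1 - P.1) + b' * (Q.2 - P.2)) = (a * b' - a' * b) * (Q.1 - P.1) := by ring
        rw [e1, e2] at this; linarith
      rcases mul_eq_zero.mp key with h | h
      · exact h
      · exact absurd h h1
  -- now use hR and hgP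
  have eR : a * (R.1 - P.1) + b * (R.2 - P.2) = 0 := by linear_combination hR - hfP
  have goal' : a' * (R.1 - P.1) + b' * (R.2 - P.2) = 0 := by
    rcases lin_grad_ne f hf with ha | hb
    · have : R.1 - P.1 = -(b * (R.2 - P.2)) / a := by rw [eq_div_iff (show a ≠ 0 from ha)]; linear_combination eR
      apply mul_left_cancel₀ (show a ≠ 0 from ha)
      linear_combination a' * eR + (R.2 - P.2) * det
    · have : R.2 - P.2 = -(a * (R.1 - P.1)) / b := by rw [eq_div_iff (show b ≠ 0 from hb)]; linear_combination eR
      apply mul_left_cancel₀ (show b ≠ 0 from hb)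
      linear_combination b' * eR - (R.1 - P.1) * det
  linear_combination goal' + hgP

/-- Any maximal line of a `GC_n` set `X` different from a maximal line
`lam` is a maximal line of `X \ lam` (a `GC_{n-1}` set). -/
theorem maximal_line_stays_maximal
    (n : ℕ) (hn : 1 ≤ n) (X : Finset (ℝ × ℝ)) (hX : GCSet n X)
    (lam mu : MvPolynomial (Fin 2) ℝ)
    (hlam : IsMaximalLine n X lam) (hmu : IsMaximalLine n X mu)
    (hne : ¬ SameLine lam mu) :
    IsMaximalLine (n - 1) (X.filter (fun A => ¬ OnLine lam A)) mu := by
  obtain ⟨hlaml, hlamc⟩ := hlam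
  obtain ⟨hmul, hmuc⟩ := hmu
  refine ⟨hmul, ?_⟩
  -- at most one common node
  have huniq : ∀ B B' : ℝ × ℝ, B ≠ B' → OnLine lam B → OnLine mu B →
      OnLine lam B' → OnLine mu B' → False := by
    intro B B' hBB h1 h2 h3 h4
    exact hne (fun P => ⟨two_points lam mu hlaml hmul B B' hBB h1 h3 h2 h4 P,
      two_points mu lam hmul hlaml B B' hBB h2 h4 h1 h3 P⟩)
  -- existence of a common node
  have hex : ∃ B ∈ X, OnLine lam B ∧ OnLine mu B := by
    by_contra H
    push_neg at H
    have hMne : (X.filter (fun A => OnLine mu A)).Nonempty :=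
      Finset.card_pos.mp (by rw [hmuc]; omega)
    obtain ⟨A, hA⟩ := hMne
    rw [Finset.mem_filter] at hA
    obtain ⟨hAX, hAmu⟩ := hA
    obtain ⟨f, hflin, hdeg, hA1, hvan⟩ := hX.2 A hAX
    have hAnl : ¬ OnLine lam A := fun h => H A hAX h hAmu
    have hkill : ∀ B ∈ X, B ≠ A → ∃ i, evalPt (f i) B = 0 := by
      intro B hB hBA
      have h0 := hvan B hB hBA
      rw [evalPt, map_prod] at h0
      obtain ⟨i, _, hi⟩ := Finset.prod_eq_zero_iff.mp h0
      exact ⟨i, hi⟩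
    have hnn : Nonempty (Fin n) := ⟨⟨0, hn⟩⟩
    set g : (ℝ × ℝ) → Fin n := fun B =>
      if h : ∃ i, evalPt (f i) B = 0 then h.choose else Classical.arbitrary _ with hgdef
    have hg : ∀ B, (∃ i, evalPt (f i) B = 0) → evalPt (f (g B)) B = 0 := by
      intro B h
      rw [hgdef]; simp only [dif_pos h]; exact h.choose_spec
    -- pigeonhole on lam's nodes
    obtain ⟨B1, hB1, B2, hB2, hB12, hgeq⟩ :=
      Finset.exists_ne_map_eq_of_card_lt_of_maps_to
        (s := X.filter (fun A => OnLine lam A)) (t := Finset.univ) (f := g)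
        (by rw [hlamc]; simp) (fun _ _ => Finset.mem_univ _)
    rw [Finset.mem_filter] at hB1 hB2
    have hne1 : B1 ≠ A := fun h => hAnl (h ▸ hB1.2)
    have hne2 : B2 ≠ A := fun h => hAnl (h ▸ hB2.2)
    have hz1 : evalPt (f (g B1)) B1 = 0 := hg B1 (hkill B1 hB1.1 hne1)
    have hz2 : evalPt (f (g B1)) B2 = 0 := by
      rw [hgeq]; exact hg B2 (hkill B2 hB2.1 hne2)
    -- f i0's zero set equals lam's
    have hsame : ∀ R, OnLine (f (g B1)) R → OnLine lam R :=
      fun R hR => two_points (f (g B1)) lam (hflin (g B1)) hlaml B1 B2 hB12 hz1 hz2 hB1.2 hB2.2 R hR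
    -- pigeonhole on mu's nodes minus A
    have hAM : A ∈ X.filter (fun B => OnLine mu B) := Finset.mem_filter.mpr ⟨hAX, hAmu⟩
    obtain ⟨C1, hC1, C2, hC2, hC12, hgeq'⟩ :=
      Finset.exists_ne_map_eq_of_card_lt_of_maps_to
        (s := (X.filter (fun B => OnLine mu B)).erase A) (t := Finset.univ.erase (g B1)) (f := g)
        (by rw [Finset.card_erase_of_mem hAM, Finset.card_erase_of_mem (Finset.mem_univ _), hmuc]
            simp; omega)
        (by intro B hB
            rw [Finset.mem_coe, Finset.mem_erase, Finset.mem_filter] at hB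
            obtain ⟨hBA, hBX, hBmu⟩ := hB
            refine Finset.mem_erase.mpr ⟨?_, Finset.mem_univ _⟩
            intro hgB
            have : evalPt (f (g B1)) B = 0 := by rw [← hgB]; exact hg B (hkill B hBX hBA)
            exact H B hBX (hsame B this) hBmu)
    rw [Finset.mem_erase, Finset.mem_filter] at hC1 hC2
    have hw1 : evalPt (f (g C1)) C1 = 0 := hg C1 (hkill C1 hC1.2.1 hC1.1)
    have hw2 : evalPt (f (g C1)) C2 = 0 := by
      rw [hgeq']; exact hg C2 (hkill C2 hC2.2.1 hC2.1)
    have hfA : evalPt (f (g C1)) A = 0 :=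
      two_points mu (f (g C1)) hmul (hflin (g C1)) C1 C2 hC12 hC1.2.2 hC2.2.2 hw1 hw2 A hAmu
    have : evalPt (∏ i, f i) A = 0 := by
      rw [evalPt, map_prod]
      exact Finset.prod_eq_zero (Finset.mem_univ (g C1)) hfA
    rw [hA1] at this
    exact one_ne_zero this
  -- counting
  obtain ⟨B₀, hB₀X, hB₀l, hB₀m⟩ := hex
  have hcomm : ((X.filter (fun A => OnLine mu A)).filter (fun A => OnLine lam A)).card = 1 := by
    rw [Finset.card_eq_one]
    refine ⟨B₀, ?_⟩
    ext B
    simp only [Finset.mem_filter, Finset.mem_singleton]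
    constructor
    · rintro ⟨⟨hBX, hBm⟩, hBl⟩
      by_contra hBB
      exact huniq B B₀ hBB hBl hBm hB₀l hB₀m
    · rintro rfl; exact ⟨⟨hB₀X, hB₀m⟩, hB₀l⟩
  have hsplit := Finset.card_filter_add_card_filter_not
    (s := X.filter (fun A => OnLine mu A)) (p := fun A => OnLine lam A)
  simp only [Finset.filter_filter] at hcomm hsplit ⊢
  have hcongr : X.filter (fun a => ¬ OnLine lam a ∧ OnLine mu a)
      = X.filter (fun a => OnLine mu a ∧ ¬ OnLine lam a) := by
    ext a; simp only [Finset.mem_filter]; tauto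
  rw [hcongr]
  omega
end

section
/- If ℓ is a maximal line of an n-correct set X, then the set of nodes using ℓ is exactly X \ ℓ, and hence has cardinality (n+1)n/2. -/
attribute [local instance] Classical.propDecidable

section AuxLemmas

lemma finsupp2_ext {d e : Fin 2 →₀ ℕ} (h0 : d 0 = e 0) (h1 : d 1 = e 1) : d = e :=
  Finsupp.ext (fun i => by fin_cases i <;> first | exact h0 | exact h1)

open MvPolynomial in
lemma linear_repr (l : MvPolynomial (Fin 2) ℝ) (hl : IsLinearPoly l) :
    ∃ a b c : ℝ, (a ≠ 0 ∨ b ≠ 0) ∧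
      l = C c + C a * X 0 + C b * X 1 := by
  have key : l = C (l.coeff 0) + C (l.coeff (Finsupp.single 0 1)) * X 0
      + C (l.coeff (Finsupp.single 1 1)) * X 1 := by
    ext d
    have hsum : (d.sum fun _ e => e) = d 0 + d 1 := by
      rw [Finsupp.sum_fintype]
      · exact Fin.sum_univ_two d
      · intro; rfl
    by_cases hd : d 0 + d 1 ≤ 1
    · have hcases : d = 0 ∨ d = Finsupp.single 0 1 ∨ d = Finsupp.single 1 1 := by
        rcases Nat.le_one_iff_eq_zero_or_eq_one.mp hd with h | h
        · left
          exact finsupp2_ext (by simp; omega) (by simp; omega)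
        · rcases Nat.eq_zero_or_pos (d 0) with h0 | h0
          · right; right
            exact finsupp2_ext (by simp [Finsupp.single_apply]; omega)
              (by simp [Finsupp.single_apply]; omega)
          · right; left
            exact finsupp2_ext (by simp [Finsupp.single_apply]; omega)
              (by simp [Finsupp.single_apply]; omega)
      have hne1 : (Finsupp.single (0:Fin 2) 1 : Fin 2 →₀ ℕ) ≠ Finsupp.single 1 1 := by
        intro h
        have := DFunLike.congr_fun h 0
        simp [Finsupp.single_apply] at this
      have hne2 : (Finsupp.single (0:Fin 2) 1 : Fin 2 →₀ ℕ) ≠ 0 := by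
        intro h
        have := DFunLike.congr_fun h 0
        simp [Finsupp.single_apply] at this
      have hne3 : (Finsupp.single (1:Fin 2) 1 : Fin 2 →₀ ℕ) ≠ 0 := by
        intro h
        have := DFunLike.congr_fun h 1
        simp [Finsupp.single_apply] at this
      rcases hcases with h | h | h <;> subst h <;>
        simp [coeff_add, coeff_C, coeff_C_mul, coeff_X', hne1, hne2, hne3,
          hne1.symm, hne2.symm, hne3.symm, Ne.symm]
    · have hz : l.coeff d = 0 := by
        apply coeff_eq_zero_of_totalDegree_lt
        rw [hl]
        show 1 < d.sum fun _ e => e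
        omega
      have h0 : d ≠ 0 := by intro h; subst h; simp at hd
      have h1 : d ≠ Finsupp.single 0 1 := by
        intro h; subst h; simp [Finsupp.single_apply] at hd
      have h2 : d ≠ Finsupp.single 1 1 := by
        intro h; subst h; simp [Finsupp.single_apply] at hd
      simp [hz, coeff_add, coeff_C, coeff_C_mul, coeff_X', Ne.symm h0, Ne.symm h1, Ne.symm h2,
        h0, h1, h2]
  refine ⟨_, _, _, ?_, key⟩
  by_contra h
  push_neg at h
  obtain ⟨h0, h1⟩ := h
  rw [h0, h1] at key
  simp at key
  rw [key] at hl
  simp [IsLinearPoly] at hl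

open MvPolynomial in
lemma natDegree_aeval_le (s : Fin 2 → Polynomial ℝ) (hs : ∀ i, (s i).natDegree ≤ 1)
    (p : MvPolynomial (Fin 2) ℝ) : (MvPolynomial.aeval s p).natDegree ≤ p.totalDegree := by
  rw [MvPolynomial.aeval_def, MvPolynomial.eval₂_eq]
  apply Polynomial.natDegree_sum_le_of_forall_le
  intro d hd
  refine le_trans (Polynomial.natDegree_C_mul_le _ _) ?_
  refine le_trans (Polynomial.natDegree_prod_le _ _) ?_
  refine le_trans (Finset.sum_le_sum fun i _ => le_trans Polynomial.natDegree_pow_le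
    (Nat.mul_le_mul_left (d i) (hs i))) ?_
  simp only [Nat.mul_one]
  exact MvPolynomial.le_totalDegree hd

open MvPolynomial in
lemma eval_phi (a b c : ℝ) (p : MvPolynomial (Fin 2) ℝ) (x : ℝ) :
    Polynomial.eval x (MvPolynomial.aeval
      ![Polynomial.X, Polynomial.C (-a/b) * Polynomial.X + Polynomial.C (-c/b)] p)
      = evalPt p (x, (-a*x - c)/b) := by
  induction p using MvPolynomial.induction_on with
  | C r => simp [evalPt]
  | add p q hp hq => simp [evalPt] at hp hq ⊢; rw [hp, hq]
  | mul_X p i hp =>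
    fin_cases i <;> simp [evalPt] at hp ⊢ <;> rw [hp]
    ring_nf
    · simp
    · ring

open MvPolynomial in
lemma dvd_sub_iota (a b c : ℝ) (p : MvPolynomial (Fin 2) ℝ) :
    (X 1 - (C (-a/b) * X 0 + C (-c/b))) ∣
      (p - Polynomial.aeval (X (R := ℝ) 0) (MvPolynomial.aeval
        ![Polynomial.X, Polynomial.C (-a/b) * Polynomial.X + Polynomial.C (-c/b)] p)) := by
  set α : MvPolynomial (Fin 2) ℝ := C (-a/b) * X 0 + C (-c/b) with hα
  set s : Fin 2 → Polynomial ℝ :=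
    ![Polynomial.X, Polynomial.C (-a/b) * Polynomial.X + Polynomial.C (-c/b)] with hs
  have hι : ∀ i, Polynomial.aeval (X (R := ℝ) 0) (s i) = ![X 0, α] i := by
    intro i; fin_cases i <;> simp [hs, hα]
  induction p using MvPolynomial.induction_on with
  | C r => simp
  | add p q hp hq =>
    have : (p + q) - Polynomial.aeval (X (R := ℝ) 0) (MvPolynomial.aeval s (p + q))
        = (p - Polynomial.aeval (X (R := ℝ) 0) (MvPolynomial.aeval s p))
        + (q - Polynomial.aeval (X (R := ℝ) 0) (MvPolynomial.aeval s q)) := by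
      simp [map_add]; ring
    rw [this]
    exact dvd_add hp hq
  | mul_X p i hp =>
    have heq : (p * X i) - Polynomial.aeval (X (R := ℝ) 0) (MvPolynomial.aeval s (p * X i))
        = (p - Polynomial.aeval (X (R := ℝ) 0) (MvPolynomial.aeval s p)) * X i
        + Polynomial.aeval (X (R := ℝ) 0) (MvPolynomial.aeval s p) * (X i - ![X 0, α] i) := by
      rw [map_mul, map_mul, aeval_X, hι i]
      ring
    rw [heq]
    refine dvd_add (Dvd.dvd.mul_right hp _) (Dvd.dvd.mul_left ?_ _)
    fin_cases i
    · simp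
    · simp

open MvPolynomial in
lemma key_dvd (a b c : ℝ) (hb : b ≠ 0) (n : ℕ) (p : MvPolynomial (Fin 2) ℝ)
    (hdeg : p.totalDegree ≤ n) (S : Finset ℝ) (hcard : n < S.card)
    (hS : ∀ x ∈ S, evalPt p (x, (-a*x - c)/b) = 0) :
    (C c + C a * X 0 + C b * X 1) ∣ p := by
  set s : Fin 2 → Polynomial ℝ :=
    ![Polynomial.X, Polynomial.C (-a/b) * Polynomial.X + Polynomial.C (-c/b)] with hs
  have hphi : MvPolynomial.aeval s p = 0 := by
    apply Polynomial.eq_zero_of_natDegree_lt_card_of_eval_eq_zero' _ S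
    · intro x hx
      rw [eval_phi a b c p x]
      exact hS x hx
    · refine lt_of_le_of_lt ?_ hcard
      refine le_trans (natDegree_aeval_le s ?_ p) hdeg
      intro i
      fin_cases i <;>
        simp only [hs, Matrix.cons_val_zero, Matrix.cons_val_one, Matrix.head_cons]
      · simp
      · refine le_trans (Polynomial.natDegree_add_le _ _) (max_le ?_ ?_)
        · exact le_trans (Polynomial.natDegree_C_mul_le _ _) (by simp)
        · simp
  have hdvd : (X 1 - (C (-a/b) * X 0 + C (-c/b))) ∣ p := by
    have := dvd_sub_iota a b c p
    rw [hphi] at this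
    simpa using this
  obtain ⟨q, hq⟩ := hdvd
  refine ⟨C b⁻¹ * q, ?_⟩
  rw [hq]
  have e1 : (C b : MvPolynomial (Fin 2) ℝ) * C (-a/b) = - C a := by
    rw [← C_mul]
    rw [show b * (-a/b) = -a by field_simp]
    simp
  have e2 : (C b : MvPolynomial (Fin 2) ℝ) * C (-c/b) = - C c := by
    rw [← C_mul]
    rw [show b * (-c/b) = -c by field_simp]
    simp
  have e3 : (C b : MvPolynomial (Fin 2) ℝ) * C b⁻¹ = 1 := by
    rw [← C_mul, mul_inv_cancel₀ hb, C_1]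
  rw [show (C c + C a * X 0 + C b * X 1 : MvPolynomial (Fin 2) ℝ)
      = C b * (X 1 - (C (-a/b) * X 0 + C (-c/b))) by
    rw [mul_sub, mul_add, ← mul_assoc, e1, e2]
    ring]
  linear_combination (-(X 1 - (C (-a/b) * X 0 + C (-c/b) : MvPolynomial (Fin 2) ℝ)) * q) * e3

open MvPolynomial in
lemma eval_linear (a b c : ℝ) (A : ℝ × ℝ) :
    evalPt (C c + C a * X 0 + C b * X 1) A = c + a * A.1 + b * A.2 := by
  simp [evalPt]

open MvPolynomial in
lemma swap_eval (q : MvPolynomial (Fin 2) ℝ) (u v : ℝ) :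
    evalPt (rename (Equiv.swap (0:Fin 2) 1) q) (u, v) = evalPt q (v, u) := by
  unfold evalPt
  rw [eval_rename]
  rw [show (![(u, v).1, (u, v).2] ∘ ⇑(Equiv.swap (0:Fin 2) 1)) = ![(v, u).1, (v, u).2] from
    funext fun i => by fin_cases i <;> simp]

open MvPolynomial in
lemma line_dvd (n : ℕ) (l p : MvPolynomial (Fin 2) ℝ) (hl : IsLinearPoly l)
    (hdeg : p.totalDegree ≤ n) (T : Finset (ℝ × ℝ)) (hT : n < T.card)
    (hTl : ∀ A ∈ T, OnLine l A) (hTp : ∀ A ∈ T, evalPt p A = 0) : l ∣ p := by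
  obtain ⟨a, b, c, habc, hrepr⟩ := linear_repr l hl
  have honl : ∀ A ∈ T, c + a * A.1 + b * A.2 = 0 := by
    intro A hA
    have := hTl A hA
    rwa [OnLine, hrepr, eval_linear] at this
  by_cases hb : b ≠ 0
  · set S : Finset ℝ := T.image Prod.fst with hS
    have hinj : Set.InjOn (Prod.fst : ℝ × ℝ → ℝ) ↑T := by
      intro A hA B hB h
      have h1 := honl A hA
      have h2 := honl B hB
      rw [h] at h1
      have : A.2 = B.2 := mul_left_cancel₀ hb (by linarith : b * A.2 = b * B.2)
      exact Prod.ext h this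
    have hcard : n < S.card := by rw [hS, Finset.card_image_of_injOn hinj]; exact hT
    rw [hrepr]
    apply key_dvd a b c hb n p hdeg S hcard
    intro x hx
    rw [hS, Finset.mem_image] at hx
    obtain ⟨A, hA, hAx⟩ := hx
    have h1 := honl A hA
    have hsnd : A.2 = (-a*A.1 - c)/b := by field_simp; linarith
    rw [show ((x:ℝ), (-a*x - c)/b) = A from by rw [← hAx, ← hsnd]]
    exact hTp A hA
  · push_neg at hb
    subst hb
    have ha : a ≠ 0 := by tauto
    have hswap : (C c + C 0 * X 0 + C a * X 1 : MvPolynomial (Fin 2) ℝ) ∣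
        rename (Equiv.swap (0:Fin 2) 1) p := by
      apply key_dvd 0 a c ha n _ (le_trans (totalDegree_rename_le _ _) hdeg)
        (T.image Prod.snd)
      · rw [Finset.card_image_of_injOn]
        · exact hT
        · intro A hA B hB h
          have h1 := honl A hA
          have h2 := honl B hB
          have : A.1 = B.1 := mul_left_cancel₀ ha (by linarith : a * A.1 = a * B.1)
          exact Prod.ext this h
      · intro y hy
        rw [Finset.mem_image] at hy
        obtain ⟨A, hA, hAy⟩ := hy
        have h1 := honl A hA
        have hx1 : A.1 = (-0*y - c)/a := by
          simp at h1 ⊢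
          field_simp
          linarith
        subst hAy
        rw [show ((A.2 : ℝ), (-0*A.2 - c)/a) = (A.2, A.1) by rw [hx1]]
        rw [swap_eval]
        exact hTp A hA
    have := map_dvd (rename (Equiv.swap (0:Fin 2) 1)).toRingHom hswap
    simp only [AlgHom.toRingHom_eq_coe, RingHom.coe_coe] at this
    rw [rename_rename] at this
    rw [show (Equiv.swap (0:Fin 2) 1) ∘ (Equiv.swap (0:Fin 2) 1) = id by
      funext i; simp] at this
    rw [rename_id] at this
    have hrw : rename (Equiv.swap (0:Fin 2) 1) (C c + C 0 * X 0 + C a * X 1 :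
        MvPolynomial (Fin 2) ℝ) = C c + C a * X 0 + C 0 * X 1 := by
      simp only [map_add, map_mul, rename_C, rename_X, Equiv.swap_apply_left,
        Equiv.swap_apply_right]
      ring
    rw [hrw] at this
    rw [hrepr]
    exact this

end AuxLemmas

/-- If `l` is a maximal line of an `n`-correct set `X`, then
`Xˡ = X \ l`, hence `#Xˡ = (n+1)n/2`. -/
theorem usedset_of_maximal_line
    (n : ℕ) (X : Finset (ℝ × ℝ)) (hX : NCorrect n X)
    (l : MvPolynomial (Fin 2) ℝ) (hl : IsMaximalLine n X l) :
    UsedSet n X l = X.filter (fun A => ¬ OnLine l A) ∧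
    (UsedSet n X l).card = (n + 1) * n / 2 := by
  obtain ⟨hlin, hcnt⟩ := hl
  have hset : UsedSet n X l = X.filter (fun A => ¬ OnLine l A) := by
    ext A
    simp only [UsedSet, Finset.mem_filter]
    constructor
    · rintro ⟨hAX, p, hfund, q, hpq⟩
      refine ⟨hAX, fun honl => ?_⟩
      have h1 : evalPt p A = 1 := hfund.2.1
      have h0 : evalPt p A = 0 := by
        rw [hpq]
        unfold evalPt at honl ⊢
        rw [map_mul]
        rw [show (MvPolynomial.eval ![A.1, A.2]) l = 0 from honl]
        ring
      rw [h1] at h0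
      norm_num at h0
    · rintro ⟨hAX, honl⟩
      refine ⟨hAX, ?_⟩
      obtain ⟨p, ⟨hpdeg, hpval⟩, -⟩ := hX.2 (fun B => if B = A then 1 else 0)
      refine ⟨p, ⟨hpdeg, ?_, ?_⟩, ?_⟩
      · have := hpval A hAX
        simpa using this
      · intro B hB hBA
        have := hpval B hB
        simpa [hBA] using this
      · apply line_dvd n l p hlin hpdeg (X.filter (fun A => OnLine l A))
        · rw [hcnt]; omega
        · intro B hB
          exact (Finset.mem_filter.mp hB).2
        · intro B hB
          obtain ⟨hBX, hBl⟩ := Finset.mem_filter.mp hB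
          have hBA : B ≠ A := fun h => honl (h ▸ hBl)
          have := hpval B hBX
          simpa [hBA] using this
  refine ⟨hset, ?_⟩
  rw [hset]
  have hsum := Finset.card_filter_add_card_filter_not (s := X)
    (fun A => OnLine l A)
  rw [hcnt, hX.1] at hsum
  obtain ⟨k, hk⟩ := Nat.even_mul_succ_self n
  have h1 : (n + 2) * (n + 1) = 2 * k + 2 * (n + 1) := by
    rw [show (n+2)*(n+1) = n*(n+1)+2*(n+1) from by ring, hk]
    ring
  have h2 : (n + 1) * n = 2 * k := by
    rw [show (n+1)*n = n*(n+1) from by ring, hk]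
    ring
  rw [h1] at hsum
  rw [h2]
  omega
end
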